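/- Invariance of orientability: let X be a type and let w, w' be polygon words over X with w ∼ w'. Then w contains a concord pair if and only if w' contains a concord pair. Equivalently, having only discord pairs is invariant under the equivalence ∼ of combinatorial polygons; a combinatorial polygon gives an orientable surface if and only if no concord letters occur in any word representing it. -/

import Mathlib

namespace Surface

/-- A signed word over `X`: the entry `(a, true)` represents the edge `a`, and
`(a, false)` represents its inverse `ā`. -/
abbrev Word (X : Type*) := List (X × Bool)

/-- The inverse of a signed word: reverse it and negate every `Bool`. -/
def wordInv {X : Type*} (w : Word X) : Word X :=
  (w.map fun p => (p.1, !p.2)).reverse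

/-- The letter `a` occurs in the signed word `w`. -/
def Occurs {X : Type*} (a : X) (w : Word X) : Prop :=
  ∃ s : Bool, (a, s) ∈ w

/-- A polygon word: every letter that occurs, occurs exactly twice (counting `(a,true)`
and `(a,false)` together). -/
def IsPolygon {X : Type*} [DecidableEq X] (w : Word X) : Prop :=
  ∀ a : X, Occurs a w → (w.map Prod.fst).count a = 2

/-- The smallest equivalence relation on signed words closed under cyclicity, inversion,
cancellation, the discord rule and the concord rule. -/
inductive WEquiv {X : Type*} : Word X → Word X → Prop
  | refl (w : Word X) : WEquiv w w
  | symm {w v : Word X} : WEquiv w v → WEquiv v w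
  | trans {w v u : Word X} : WEquiv w v → WEquiv v u → WEquiv w u
  /-- (1) cyclicity -/
  | cyc (α : Word X) (x : X × Bool) : WEquiv (α ++ [x]) ([x] ++ α)
  /-- (2) inversion -/
  | inv (w : Word X) : WEquiv w (wordInv w)
  /-- (3) cancellation -/
  | cancel (α : Word X) (a : X) (s : Bool) (hα : ¬ Occurs a α) :
      WEquiv (α ++ [(a, s), (a, !s)]) α
  /-- (4) discord rule -/
  | discord (α β β' : Word X) (a : X) (s : Bool)
      (hα : ¬ Occurs a α) (hβ : ¬ Occurs a β) (hβ' : ¬ Occurs a β') :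
      WEquiv (α ++ [(a, s)] ++ β ++ β' ++ [(a, !s)])
             (α ++ [(a, s)] ++ β' ++ β ++ [(a, !s)])
  /-- (5) concord rule -/
  | concord (α β : Word X) (a : X) (s : Bool)
      (hα : ¬ Occurs a α) (hβ : ¬ Occurs a β) :
      WEquiv (α ++ [(a, s)] ++ β ++ [(a, s)])
             (α ++ wordInv β ++ [(a, s), (a, s)])

/-- The word `a₁a₁a₂a₂⋯aₖaₖ`, representing the connected sum of `k` projective planes. -/
def PWord {X : Type*} {k : ℕ} (a : Fin k → X) : Word X :=
  (List.ofFn fun i => [(a i, true), (a i, true)]).flatten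

/-- The word `a₁b₁ā₁b̄₁⋯aₙbₙāₙb̄ₙ`, representing the connected sum of `n` tori. -/
def TWord {X : Type*} {n : ℕ} (a b : Fin n → X) : Word X :=
  (List.ofFn fun i => [(a i, true), (b i, true), (a i, false), (b i, false)]).flatten

/-- `w` contains a concord pair: some letter occurs twice with the same sign. -/
def HasConcordPair {X : Type*} (w : Word X) : Prop :=
  ∃ (a : X) (s : Bool) (α β γ : Word X),
    w = α ++ [(a, s)] ++ β ++ [(a, s)] ++ γ

/-- `w` contains two interleaved pairs: letters `a ≠ b` occurring in the pattern
`⋯a⋯b⋯a⋯b⋯`. -/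
def HasInterleaved {X : Type*} (w : Word X) : Prop :=
  ∃ (a b : X) (s s' t t' : Bool) (α β γ δ ε : Word X), a ≠ b ∧
    w = α ++ [(a, s)] ++ β ++ [(b, t)] ++ γ ++ [(a, s')] ++ δ ++ [(b, t')] ++ ε


attribute [local instance 2000] instBEqOfDecidableEq
attribute [local instance 2000] instLawfulBEq

lemma sublist_pair_decomp {A : Type*} (p : A) :
    ∀ w : List A, List.Sublist [p, p] w → ∃ α β γ : List A, w = α ++ [p] ++ β ++ [p] ++ γ := by
  intro w h
  induction w with
  | nil => exact absurd (List.eq_nil_of_sublist_nil h) (by simp)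
  | cons x t ih =>
    cases h with
    | cons _ h' =>
      obtain ⟨α, β, γ, rfl⟩ := ih h'
      exact ⟨x :: α, β, γ, by simp⟩
    | cons_cons _ h' =>
      have hp : p ∈ t := (List.singleton_sublist.mp h')
      obtain ⟨β, γ, rfl⟩ := List.append_of_mem hp
      exact ⟨[], β, γ, by simp⟩

lemma hasConcordPair_iff {X : Type*} [DecidableEq X] (w : Word X) :
    HasConcordPair w ↔ ∃ p : X × Bool, 2 ≤ w.count p := by
  constructor
  · rintro ⟨a, s, α, β, γ, rfl⟩
    refine ⟨(a, s), ?_⟩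
    simp only [List.count_append, List.count_cons, beq_self_eq_true, if_true, List.count_nil]
    omega
  · rintro ⟨⟨a, s⟩, hp⟩
    have hd : List.Sublist [(a, s), (a, s)] w := by
      rw [← List.duplicate_iff_sublist]
      exact List.duplicate_iff_two_le_count.mpr hp
    obtain ⟨α, β, γ, rfl⟩ := sublist_pair_decomp _ _ hd
    exact ⟨a, s, α, β, γ, rfl⟩

lemma count_wordInv {X : Type*} [DecidableEq X] (w : Word X) (a : X) (s : Bool) :
    (wordInv w).count (a, s) = w.count (a, !s) := by
  have hinj : Function.Injective (fun p : X × Bool => (p.1, !p.2)) := by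
    rintro ⟨x, b⟩ ⟨y, c⟩ h
    simp only [Prod.mk.injEq] at h
    obtain ⟨h1, h2⟩ := h
    simp [h1, Bool.not_inj h2]
  have : (a, s) = (fun p : X × Bool => (p.1, !p.2)) (a, !s) := by simp
  rw [wordInv, List.count_reverse, this]
  exact List.count_map_of_injective _ _ hinj _

lemma count_eq_zero_of_not_occurs {X : Type*} [DecidableEq X] {a : X} {α : Word X}
    (h : ¬ Occurs a α) (s : Bool) : α.count (a, s) = 0 := by
  exact List.count_eq_zero_of_not_mem fun hm => h ⟨s, hm⟩

theorem hcp_invariant {X : Type*} [DecidableEq X]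
    {w w' : Word X} (h : WEquiv w w') : HasConcordPair w ↔ HasConcordPair w' := by
  induction h with
  | refl w => rfl
  | symm _ ih => exact ih.symm
  | trans _ _ ih1 ih2 => exact ih1.trans ih2
  | cyc α x =>
    rw [hasConcordPair_iff, hasConcordPair_iff]
    have hperm : List.Perm (α ++ [x]) ([x] ++ α) := List.perm_append_comm
    exact exists_congr fun p => by rw [hperm.count_eq]
  | inv w =>
    rw [hasConcordPair_iff, hasConcordPair_iff]
    constructor
    · rintro ⟨⟨a, s⟩, hp⟩
      exact ⟨(a, !s), by rwa [count_wordInv, Bool.not_not]⟩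
    · rintro ⟨⟨a, s⟩, hp⟩
      exact ⟨(a, !s), by rwa [count_wordInv] at hp⟩
  | cancel α a s hα =>
    rw [hasConcordPair_iff, hasConcordPair_iff]
    constructor
    · rintro ⟨⟨b, t⟩, hp⟩
      refine ⟨(b, t), ?_⟩
      rw [List.count_append] at hp
      by_cases hb : b = a
      · subst hb
        rw [count_eq_zero_of_not_occurs hα] at hp
        have h1 : List.count (b, t) [(b, s), (b, !s)] ≤ 1 := by
          rcases t <;> rcases s <;> simp [List.count_cons]
        omega
      · have : List.count (b, t) [(a, s), (a, !s)] = 0 := by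
          simp [List.count_cons, hb, Ne.symm hb]
        omega
    · rintro ⟨p, hp⟩
      refine ⟨p, le_trans hp ?_⟩
      rw [List.count_append]
      omega
  | discord α β β' a s hα hβ hβ' =>
    rw [hasConcordPair_iff, hasConcordPair_iff]
    have hperm : List.Perm (α ++ [(a, s)] ++ β ++ β' ++ [(a, !s)])
        (α ++ [(a, s)] ++ β' ++ β ++ [(a, !s)]) := by
      simp only [List.append_assoc]
      refine List.Perm.append_left _ (List.Perm.append_left _ ?_)
      rw [← List.append_assoc, ← List.append_assoc]
      exact List.Perm.append_right _ List.perm_append_comm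
    exact exists_congr fun p => by rw [hperm.count_eq]
  | concord α β a s hα hβ =>
    constructor
    · intro _
      exact ⟨a, s, α ++ wordInv β, [], [(a, s)].tail, by simp⟩
    · intro _
      exact ⟨a, s, α, β, [], by simp⟩

/-- Invariance of orientability: containing a concord pair is invariant under the
equivalence of combinatorial polygons. -/
theorem orientability_invariant {X : Type*} [DecidableEq X]
    (w w' : Word X) (hw : IsPolygon w) (hw' : IsPolygon w') (h : WEquiv w w') :
    HasConcordPair w ↔ HasConcordPair w' := by
  exact hcp_invariant h

end Surface
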